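/- Let (g,[·,·]_g) be a Lie algebra over a field K, ρ: g → gl(V) a representation, and T: V → g an embedding tensor. Fix n ≥ 1 and let f_g: g^n → g be an alternating multilinear map and f_V: g^{n−1} × V → V a map multilinear and alternating in the g-arguments. Define: (δf)_g = d_CE f_g (the Chevalley–Eilenberg coboundary of g with adjoint coefficients); (δf)_V(x₁,…,x_n,v) = Σ_{1≤i<j≤n}(−1)^i f_V(x₁,…,x̂_i,…,x_{j−1},[x_i,x_j]_g,x_{j+1},…,x_n,v) + (−1)^{n−1}ρ(f_g(x₁,…,x_n))v + Σ_{i=1}^{n}(−1)^{i+1}(ρ(x_i)f_V(x₁,…,x̂_i,…,x_n,v) − f_V(x₁,…,x̂_i,…,x_n,ρ(x_i)v)); Ω_T(f_g,f_V)(v₁,…,v_n) = (−1)^n(f_g(Tv₁,…,Tv_n) − T f_V(Tv₁,…,Tv_{n−1}, v_n)); and for a k-multilinear θ: V^k → g, ∂_T θ(u₁,…,u_{k+1}) = Σ_{i=1}^{k}(−1)^{i+1}[Tu_i, θ(u₁,…,û_i,…,u_{k+1})]_g + (−1)^{k+1}[θ(u₁,…,u_k), Tu_{k+1}]_g + (−1)^k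 T(ρ(θ(u₁,…,u_k))u_{k+1}) + Σ_{1≤i<j≤k+1}(−1)^i θ(u₁,…,û_i,…,u_{j−1}, ρ(Tu_i)u_j, u_{j+1},…,u_{k+1}). Then Ω_T(δ(f_g,f_V)) + ∂_T(Ω_T(f_g,f_V)) = 0 as multilinear maps V^{n+1} → g. -/

import Mathlib

attribute [local instance 100] LieRing.ofAssociativeRing

namespace LieLeibnizCohomology

variable (K : Type*) [Field K] {g V : Type*} [LieRing g] [LieAlgebra K g]
  [AddCommGroup V] [Module K V]

/-- The coboundary operator `∂_T` of an embedding tensor `T`, on `k`-cochains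
`θ : V^k → g`. -/
def dT (ρ : g →ₗ⁅K⁆ Module.End K V) (T : V →ₗ[K] g) {k : ℕ}
    (θ : (Fin k → V) → g) : (Fin (k + 1) → V) → g := fun u =>
  (∑ i : Fin k, ((-1 : K) ^ (i : ℕ)) •
      ⁅T (u i.castSucc), θ (fun l => u (i.castSucc.succAbove l))⁆)
    + ((-1 : K) ^ (k + 1)) • ⁅θ (fun l => u l.castSucc), T (u (Fin.last k))⁆
    + ((-1 : K) ^ k) • T (ρ (θ (fun l => u l.castSucc)) (u (Fin.last k)))
    + ∑ i : Fin (k + 1), ∑ j : Fin (k + 1),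
        if i < j then
          ((-1 : K) ^ ((i : ℕ) + 1)) •
            θ (fun l => Function.update u j (ρ (T (u i)) (u j)) (i.succAbove l))
        else 0

/-- The Chevalley–Eilenberg coboundary of the Lie algebra `g` with coefficients in
the adjoint representation, on `(m+1)`-cochains. -/
def dCE {m : ℕ} (fg : (Fin (m + 1) → g) → g) : (Fin (m + 2) → g) → g := fun x =>
  (∑ i : Fin (m + 2), ((-1 : K) ^ (i : ℕ)) • ⁅x i, fg (fun l => x (i.succAbove l))⁆)
    + ∑ i : Fin (m + 2), ∑ j : Fin (m + 2),
        if h : i < j then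
          ((-1 : K) ^ ((i : ℕ) + (j : ℕ))) •
            fg (Fin.cons ⁅x i, x j⁆ fun l : Fin m =>
              x (j.succAbove
                ((⟨(i : ℕ), lt_of_lt_of_le (Fin.lt_def.mp h)
                    (Nat.lt_succ_iff.mp j.isLt)⟩ : Fin (m + 1)).succAbove l)))
        else 0

/-- The `V`-component of the coboundary `δ` of the LieRep pair `(g, V)`. -/
def deltaV (ρ : g →ₗ⁅K⁆ Module.End K V) {m : ℕ}
    (fg : (Fin (m + 1) → g) → g) (fv : (Fin m → g) → V → V) :
    (Fin (m + 1) → g) → V → V := fun x v =>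
  (∑ i : Fin (m + 1), ∑ j : Fin (m + 1),
      if i < j then
        ((-1 : K) ^ ((i : ℕ) + 1)) •
          fv (fun l => Function.update x j ⁅x i, x j⁆ (i.succAbove l)) v
      else 0)
    + ((-1 : K) ^ m) • ρ (fg x) v
    + ∑ i : Fin (m + 1), ((-1 : K) ^ (i : ℕ)) •
        (ρ (x i) (fv (fun l => x (i.succAbove l)) v)
          - fv (fun l => x (i.succAbove l)) (ρ (x i) v))

/-- The connecting map `Ω_T`, sending an `(n+1)`-cochain pair `(f_g, f_V)` of the
LieRep pair to an `(n+1)`-cochain of the embedding tensor: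
`Ω_T(f_g,f_V)(v₁,…,v_{n+1}) = (−1)^{n+1}(f_g(Tv₁,…,Tv_{n+1}) −
T f_V(Tv₁,…,Tv_n, v_{n+1}))`. -/
def Omega (T : V →ₗ[K] g) {n : ℕ} (fg : (Fin (n + 1) → g) → g)
    (fv : (Fin n → g) → V → V) : (Fin (n + 1) → V) → g := fun v =>
  ((-1 : K) ^ (n + 1)) •
    (fg (fun l => T (v l)) - T (fv (fun l => T (v l.castSucc)) (v (Fin.last n))))

end LieLeibnizCohomology


private lemma embAux_val_mk {n a : ℕ} (h : a < n) : ((⟨a, h⟩ : Fin n) : ℕ) = a := rfl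

private lemma embAux_sa_val {n : ℕ} (i : Fin (n + 1)) (l : Fin n) :
    ((i.succAbove l : Fin (n + 1)) : ℕ) =
      if (l : ℕ) < (i : ℕ) then (l : ℕ) else (l : ℕ) + 1 := by
  rcases lt_or_ge l.castSucc i with h | h
  · rw [Fin.succAbove_of_castSucc_lt _ _ h, Fin.coe_castSucc,
      if_pos (by simpa [Fin.lt_def] using h)]
  · rw [Fin.succAbove_of_le_castSucc _ _ h, Fin.val_succ,
      if_neg (by simp only [Fin.le_def, Fin.coe_castSucc] at h; omega)]

private lemma embAux_csl {n : ℕ} (i : Fin (n + 1)) :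
    i.castSucc.succAbove (Fin.last n) = Fin.last (n + 1) := by
  rw [Fin.succAbove_of_le_castSucc _ _ (Fin.castSucc_le_castSucc_iff.mpr (Fin.le_last i)),
    Fin.succ_last]

private lemma embAux_cons_pos {n : ℕ} {α : Type*} (b : α) (y : Fin n → α) (k : Fin (n + 1))
    (hk : (k : ℕ) ≠ 0) :
    (Fin.cons b y : ∀ _ : Fin (n + 1), α) k = y ⟨(k : ℕ) - 1, by have := k.isLt; omega⟩ := by
  induction k using Fin.cases with
  | zero => simp at hk
  | succ i => rw [Fin.cons_succ]; congr 1

private lemma embAux_npe {R : Type*} [Monoid R] [HasDistribNeg R] {p q : ℕ}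
    (h : p % 2 = q % 2) : (-1 : R) ^ p = (-1 : R) ^ q := by
  rcases Nat.even_or_odd p with hp | hp
  · rw [hp.neg_one_pow, (Nat.even_iff.mpr (by have := Nat.even_iff.mp hp; omega)).neg_one_pow]
  · rw [hp.neg_one_pow, (Nat.odd_iff.mpr (by have := Nat.odd_iff.mp hp; omega)).neg_one_pow]

private lemma embAux_npc {R : Type*} [Ring R] {p q : ℕ}
    (h : p % 2 ≠ q % 2) : (-1 : R) ^ p + (-1 : R) ^ q = 0 := by
  rcases Nat.even_or_odd p with hp | hp
  · rw [hp.neg_one_pow, (Nat.odd_iff.mpr (by have := Nat.even_iff.mp hp; omega)).neg_one_pow]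
    exact add_neg_cancel 1
  · rw [hp.neg_one_pow, (Nat.even_iff.mpr (by have := Nat.odd_iff.mp hp; omega)).neg_one_pow]
    exact neg_add_cancel 1

private lemma embAux_ite_sub_zero {M : Type*} [SubtractionMonoid M] (c : Prop) [Decidable c]
    (a b : M) : (if c then a - b else 0) = (if c then a else 0) - (if c then b else 0) := by
  split <;> simp

private lemma embAux_sum_split {M : Type*} [AddCommMonoid M] {n : ℕ}
    (F : Fin (n + 1) → Fin (n + 1) → M) (h0 : ∀ x₁, F (Fin.last n) x₁ = 0) :
    (∑ x : Fin (n + 1), ∑ x₁ : Fin (n + 1), F x x₁)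
      = (∑ x : Fin n, ∑ x₁ : Fin n, F x.castSucc x₁.castSucc)
        + ∑ x : Fin n, F x.castSucc (Fin.last n) := by
  rw [Fin.sum_univ_castSucc (f := fun x : Fin (n + 1) => ∑ x₁ : Fin (n + 1), F x x₁),
    Finset.sum_eq_zero fun x₁ _ => h0 x₁, add_zero,
    Finset.sum_congr rfl fun x _ => Fin.sum_univ_castSucc (f := fun x₁ => F x.castSucc x₁),
    Finset.sum_add_distrib]

private lemma embAux_fg_update_perm {K : Type*} [Field K] {g : Type*} [AddCommGroup g]
    [Module K g] {m : ℕ} (f : AlternatingMap K g g (Fin (m + 1))) (y : Fin (m + 2) → g) (b : g)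
    {i j : Fin (m + 2)} (h : i < j) (i₁ : Fin (m + 1)) (hi₁ : (i₁ : ℕ) = (i : ℕ)) :
    f (fun l => Function.update y j b (i.succAbove l)) =
      (-1 : K) ^ ((j : ℕ) - 1) •
        f (Fin.cons b fun l : Fin m => y (j.succAbove (i₁.succAbove l))) := by
  have hij : (i : ℕ) < (j : ℕ) := Fin.lt_def.mp h
  have hjn : (j : ℕ) < m + 2 := j.isLt
  obtain ⟨p, hpv⟩ : ∃ p : Fin (m + 1), (p : ℕ) = (j : ℕ) - 1 := ⟨⟨(j : ℕ) - 1, by omega⟩, rfl⟩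
  have key : (fun l => Function.update y j b (i.succAbove l)) =
      (Fin.cons b fun l : Fin m => y (j.succAbove (i₁.succAbove l))) ∘ ⇑(Fin.cycleRange p) := by
    funext l
    simp only [Function.comp_apply]
    rcases lt_trichotomy l p with hl | hl | hl
    · have hlv : (l : ℕ) < (j : ℕ) - 1 := by have := Fin.lt_def.mp hl; omega
      have hadd : ((l + 1 : Fin (m + 1)) : ℕ) = (l : ℕ) + 1 :=
        Fin.val_add_one_of_lt (lt_of_lt_of_le hl p.le_last)
      rw [Fin.cycleRange_of_lt hl, embAux_cons_pos _ _ _ (by omega)]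
      have hne : i.succAbove l ≠ j := by
        intro e
        have hv := embAux_sa_val i l
        rw [e] at hv
        rcases Nat.lt_or_ge (l : ℕ) (i : ℕ) with hc | hc
        · rw [if_pos hc] at hv; omega
        · rw [if_neg (by omega)] at hv; omega
      rw [Function.update_apply, if_neg hne]
      congr 1
      refine Fin.ext ?_
      simp only [embAux_sa_val, embAux_val_mk, hi₁, hadd]
      split_ifs <;> omega
    · subst hl
      rw [Fin.cycleRange_self, Fin.cons_zero]
      have hsp : i.succAbove l = j := by
        refine Fin.ext ?_
        rw [embAux_sa_val, if_neg (by omega)]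
        omega
      rw [hsp, Function.update_self]
    · have hlv : (j : ℕ) - 1 < (l : ℕ) := by have := Fin.lt_def.mp hl; omega
      rw [Fin.cycleRange_of_gt hl, embAux_cons_pos _ _ _ (by omega)]
      have hne : i.succAbove l ≠ j := by
        intro e
        have hv := embAux_sa_val i l
        rw [e] at hv
        rcases Nat.lt_or_ge (l : ℕ) (i : ℕ) with hc | hc
        · rw [if_pos hc] at hv; omega
        · rw [if_neg (by omega)] at hv; omega
      rw [Function.update_apply, if_neg hne]
      congr 1
      refine Fin.ext ?_
      simp only [embAux_sa_val, embAux_val_mk, hi₁]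
      split_ifs <;> omega
  rw [key, AlternatingMap.map_perm, Fin.sign_cycleRange, hpv]
  rcases Nat.even_or_odd ((j : ℕ) - 1) with he | he
  · rw [he.neg_one_pow, he.neg_one_pow, one_smul, one_smul]
  · rw [he.neg_one_pow, he.neg_one_pow, Units.smul_def, Units.val_neg, Units.val_one,
      neg_one_zsmul, neg_one_smul]

open LieLeibnizCohomology in
/-- For an embedding tensor `T` on a LieRep pair `(g, V)` and an `(m+1)`-cochain
`(f_g, f_V)` of the LieRep pair (with `f_g` alternating `(m+1)`-multilinear and `f_V`
multilinear and alternating in its `m` `g`-arguments), one has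
`Ω_T(δ(f_g,f_V)) + ∂_T(Ω_T(f_g,f_V)) = 0`. -/
theorem Omega_delta_add_dT_Omega_eq_zero
    (K : Type*) [Field K] (g V : Type*) [LieRing g] [LieAlgebra K g]
    [AddCommGroup V] [Module K V]
    (ρ : g →ₗ⁅K⁆ Module.End K V) (T : V →ₗ[K] g)
    (hT : ∀ u v : V, ⁅T u, T v⁆ = T (ρ (T u) v))
    (m : ℕ) (fg : AlternatingMap K g g (Fin (m + 1)))
    (fV : AlternatingMap K g (Module.End K V) (Fin m)) :
    ∀ v : Fin (m + 2) → V,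
      Omega K T (dCE K ⇑fg) (deltaV K ρ ⇑fg fun x w => fV x w) v
        + dT K ρ T (Omega K T ⇑fg fun x w => fV x w) v = 0 := by
  intro v
  simp only [Omega, dCE, deltaV, dT, smul_sub, smul_add, map_add, map_sub, map_smul, map_sum,
    Finset.smul_sum, smul_smul, apply_ite (⇑T), apply_dite (⇑T), smul_ite, smul_dite, smul_zero,
    map_zero, LinearMap.smul_apply, LinearMap.sub_apply, LinearMap.add_apply,
    lie_smul, lie_sub, sub_lie, smul_lie, embAux_ite_sub_zero, Finset.sum_sub_distrib]
  rw [embAux_sum_split (F := fun x x₁ : Fin (m + 1 + 1) =>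
        if x < x₁ then
          ((-1 : K) ^ ((x : ℕ) + 1) * (-1 : K) ^ (m + 1)) •
            T ((fV fun l => T (Function.update v x₁ (ρ (T (v x)) (v x₁)) (x.succAbove l.castSucc)))
              (Function.update v x₁ (ρ (T (v x)) (v x₁)) (x.succAbove (Fin.last m))))
        else 0) (fun x₁ => if_neg (Fin.le_last x₁).not_gt)]
  rw [Fin.sum_univ_castSucc (f := fun x : Fin (m + 2) =>
        ((-1 : K) ^ (m + 1 + 1) * (-1 : K) ^ (x : ℕ)) •
          ⁅T (v x), fg fun l => T (v (x.succAbove l))⁆)]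
  -- k1 : A1 (castSucc part) + B1a = 0
  have k1 : (∑ x : Fin (m + 1),
        ((-1 : K) ^ (m + 1 + 1) * (-1 : K) ^ ((x.castSucc : Fin (m + 2)) : ℕ)) •
          ⁅T (v x.castSucc), fg fun l => T (v (x.castSucc.succAbove l))⁆)
      + (∑ x : Fin (m + 1),
        ((-1 : K) ^ (x : ℕ) * (-1 : K) ^ (m + 1)) •
          ⁅T (v x.castSucc), fg fun l => T (v (x.castSucc.succAbove l))⁆) = 0 := by
    rw [← Finset.sum_add_distrib]
    refine Finset.sum_eq_zero fun x _ => ?_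
    simp only [Fin.coe_castSucc]
    rw [← pow_add, ← pow_add, ← add_smul,
      embAux_npc (p := m + 1 + 1 + (x : ℕ)) (q := (x : ℕ) + (m + 1)) (by omega), zero_smul]
  -- k2 : A1 (last part) + B2a = 0
  have k2 : ((-1 : K) ^ (m + 1 + 1) * (-1 : K) ^ ((Fin.last (m + 1) : Fin (m + 2)) : ℕ)) •
        ⁅T (v (Fin.last (m + 1))), fg fun l => T (v ((Fin.last (m + 1)).succAbove l))⁆
      + ((-1 : K) ^ (m + 1 + 1) * (-1 : K) ^ (m + 1)) •
        ⁅fg fun l => T (v l.castSucc), T (v (Fin.last (m + 1)))⁆ = 0 := by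
    simp only [Fin.val_last, Fin.succAbove_last]
    rw [← lie_skew, smul_neg]
    exact neg_add_cancel _
  -- k3 : A2 + B4 (fg part) = 0
  have k3 : (∑ x : Fin (m + 2), ∑ x₁ : Fin (m + 2),
        if h : x < x₁ then
          ((-1 : K) ^ (m + 1 + 1) * (-1 : K) ^ ((x : ℕ) + (x₁ : ℕ))) •
            fg (Fin.cons ⁅T (v x), T (v x₁)⁆ fun l =>
              T (v (x₁.succAbove
                ((⟨(x : ℕ), lt_of_lt_of_le (Fin.lt_def.mp h)
                    (Nat.lt_succ_iff.mp x₁.isLt)⟩ : Fin (m + 1)).succAbove l))))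
        else 0)
      + (∑ x : Fin (m + 1 + 1), ∑ x₁ : Fin (m + 1 + 1),
        if x < x₁ then
          ((-1 : K) ^ ((x : ℕ) + 1) * (-1 : K) ^ (m + 1)) •
            fg fun l => T (Function.update v x₁ (ρ (T (v x)) (v x₁)) (x.succAbove l))
        else 0) = 0 := by
    rw [← Finset.sum_add_distrib]
    refine Finset.sum_eq_zero fun x _ => ?_
    rw [← Finset.sum_add_distrib]
    refine Finset.sum_eq_zero fun x₁ _ => ?_
    by_cases hlt : x < x₁
    · rw [dif_pos hlt, if_pos hlt]
      have hlt' : (x : ℕ) < (x₁ : ℕ) := Fin.lt_def.mp hlt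
      have harg : (fun l : Fin (m + 1) =>
            T (Function.update v x₁ (ρ (T (v x)) (v x₁)) (x.succAbove l)))
          = fun l => Function.update (fun k => T (v k)) x₁ (T (ρ (T (v x)) (v x₁)))
              (x.succAbove l) := by
        funext l
        rw [Function.update_apply, Function.update_apply, apply_ite (⇑T)]
      rw [harg, embAux_fg_update_perm (K := K) fg _ _ hlt
        ⟨(x : ℕ), lt_of_lt_of_le (Fin.lt_def.mp hlt) (Nat.lt_succ_iff.mp x₁.isLt)⟩ rfl]

      rw [← hT, smul_smul, ← pow_add, ← pow_add, ← pow_add, ← add_smul,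
        embAux_npc (p := m + 1 + 1 + ((x : ℕ) + (x₁ : ℕ)))
          (q := (x : ℕ) + 1 + (m + 1) + ((x₁ : ℕ) - 1)) (by omega), zero_smul]
    · rw [dif_neg hlt, if_neg hlt, add_zero]
  -- k4 : A3 + B4 (fv part, j < last) = 0
  have k4 : (∑ x : Fin (m + 1), ∑ x₁ : Fin (m + 1),
        if x < x₁ then
          ((-1 : K) ^ (m + 1 + 1) * (-1 : K) ^ ((x : ℕ) + 1)) •
            T ((fV fun l =>
                Function.update (fun l => T (v l.castSucc)) x₁
                  ⁅T (v x.castSucc), T (v x₁.castSucc)⁆ (x.succAbove l))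
              (v (Fin.last (m + 1))))
        else 0)
      + (∑ x : Fin (m + 1), ∑ x₁ : Fin (m + 1),
        if x.castSucc < x₁.castSucc then
          ((-1 : K) ^ (((x.castSucc : Fin (m + 2)) : ℕ) + 1) * (-1 : K) ^ (m + 1)) •
            T ((fV fun l =>
                T (Function.update v x₁.castSucc (ρ (T (v x.castSucc)) (v x₁.castSucc))
                  (x.castSucc.succAbove l.castSucc)))
              (Function.update v x₁.castSucc (ρ (T (v x.castSucc)) (v x₁.castSucc))
                (x.castSucc.succAbove (Fin.last m))))
        else 0) = 0 := by
    rw [← Finset.sum_add_distrib]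
    refine Finset.sum_eq_zero fun x _ => ?_
    rw [← Finset.sum_add_distrib]
    refine Finset.sum_eq_zero fun x₁ _ => ?_
    simp only [Fin.castSucc_lt_castSucc_iff, Fin.coe_castSucc]
    by_cases hlt : x < x₁
    · rw [if_pos hlt, if_pos hlt]
      have hupd : Function.update v x₁.castSucc (ρ (T (v x.castSucc)) (v x₁.castSucc))
          (x.castSucc.succAbove (Fin.last m)) = v (Fin.last (m + 1)) := by
        rw [embAux_csl, Function.update_apply, if_neg (Fin.castSucc_lt_last x₁).ne']
      have harg : (fun l : Fin m =>
            T (Function.update v x₁.castSucc (ρ (T (v x.castSucc)) (v x₁.castSucc))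
              (x.castSucc.succAbove l.castSucc)))
          = fun l => Function.update (fun l => T (v l.castSucc)) x₁
              ⁅T (v x.castSucc), T (v x₁.castSucc)⁆ (x.succAbove l) := by
        funext l
        simp only [Fin.castSucc_succAbove_castSucc, Function.update_apply, apply_ite (⇑T),
          Fin.castSucc_inj, hT]
      rw [hupd, harg, ← pow_add, ← pow_add, ← add_smul,
        embAux_npc (p := m + 1 + 1 + ((x : ℕ) + 1)) (q := (x : ℕ) + 1 + (m + 1)) (by omega),
        zero_smul]
    · rw [if_neg hlt, if_neg hlt, add_zero]
  -- k5 : B4 (fv part, j = last) = A5b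
  have k5 : (∑ x : Fin (m + 1),
        if x.castSucc < Fin.last (m + 1) then
          ((-1 : K) ^ (((x.castSucc : Fin (m + 2)) : ℕ) + 1) * (-1 : K) ^ (m + 1)) •
            T ((fV fun l =>
                T (Function.update v (Fin.last (m + 1))
                  (ρ (T (v x.castSucc)) (v (Fin.last (m + 1))))
                  (x.castSucc.succAbove l.castSucc)))
              (Function.update v (Fin.last (m + 1))
                (ρ (T (v x.castSucc)) (v (Fin.last (m + 1))))
                (x.castSucc.succAbove (Fin.last m))))
        else 0)
      = ∑ x : Fin (m + 1),
        ((-1 : K) ^ (m + 1 + 1) * (-1 : K) ^ (x : ℕ)) •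
          T ((fV fun l => T (v (x.succAbove l).castSucc))
            (ρ (T (v x.castSucc)) (v (Fin.last (m + 1))))) := by
    refine Finset.sum_congr rfl fun x _ => ?_
    rw [if_pos (Fin.castSucc_lt_last x)]
    have hupd : Function.update v (Fin.last (m + 1))
        (ρ (T (v x.castSucc)) (v (Fin.last (m + 1)))) (x.castSucc.succAbove (Fin.last m))
        = ρ (T (v x.castSucc)) (v (Fin.last (m + 1))) := by
      rw [embAux_csl, Function.update_self]
    have harg : (fun l : Fin m =>
          T (Function.update v (Fin.last (m + 1))
            (ρ (T (v x.castSucc)) (v (Fin.last (m + 1)))) (x.castSucc.succAbove l.castSucc)))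
        = fun l => T (v (x.succAbove l).castSucc) := by
      funext l
      rw [Fin.castSucc_succAbove_castSucc, Function.update_apply,
        if_neg (Fin.castSucc_lt_last _).ne]
    rw [hupd, harg, Fin.coe_castSucc, ← pow_add, ← pow_add,
      embAux_npe (p := (x : ℕ) + 1 + (m + 1)) (q := m + 1 + 1 + (x : ℕ)) (by omega)]
  -- k6 : B3a = A4
  have k6 : ((-1 : K) ^ (m + 1) * (-1 : K) ^ (m + 1)) •
        T (ρ (fg fun l => T (v l.castSucc)) (v (Fin.last (m + 1))))
      = ((-1 : K) ^ (m + 1 + 1) * (-1 : K) ^ m) •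
        T (ρ (fg fun l => T (v l.castSucc)) (v (Fin.last (m + 1)))) := by
    rw [← pow_add, ← pow_add,
      embAux_npe (p := m + 1 + (m + 1)) (q := m + 1 + 1 + m) (by omega)]
  -- k7 : B2b + B3b = 0
  have k7 : ((-1 : K) ^ (m + 1 + 1) * (-1 : K) ^ (m + 1)) •
        ⁅T ((fV fun l => T (v l.castSucc.castSucc)) (v (Fin.last m).castSucc)),
          T (v (Fin.last (m + 1)))⁆
      + ((-1 : K) ^ (m + 1) * (-1 : K) ^ (m + 1)) •
        T (ρ (T ((fV fun l => T (v l.castSucc.castSucc)) (v (Fin.last m).castSucc)))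
          (v (Fin.last (m + 1)))) = 0 := by
    rw [hT, ← pow_add, ← pow_add, ← add_smul,
      embAux_npc (p := m + 1 + 1 + (m + 1)) (q := m + 1 + (m + 1)) (by omega), zero_smul]
  -- k8 : A5a + B1b = 0
  have k8 : (∑ x : Fin (m + 1),
        ((-1 : K) ^ (m + 1 + 1) * (-1 : K) ^ (x : ℕ)) •
          T (ρ (T (v x.castSucc))
            ((fV fun l => T (v (x.succAbove l).castSucc)) (v (Fin.last (m + 1))))))
      + (∑ x : Fin (m + 1),
        ((-1 : K) ^ (x : ℕ) * (-1 : K) ^ (m + 1)) •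
          ⁅T (v x.castSucc),
            T ((fV fun l => T (v (x.castSucc.succAbove l.castSucc)))
              (v (x.castSucc.succAbove (Fin.last m))))⁆) = 0 := by
    rw [← Finset.sum_add_distrib]
    refine Finset.sum_eq_zero fun x _ => ?_
    simp only [embAux_csl, Fin.castSucc_succAbove_castSucc]
    rw [hT, ← pow_add, ← pow_add, ← add_smul,
      embAux_npc (p := m + 1 + 1 + (x : ℕ)) (q := (x : ℕ) + (m + 1)) (by omega), zero_smul]
  linear_combination (norm := abel) k1 + k2 + k3 - k4 - k5 + k6 - k7 - k8
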